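/- Under the stated hypotheses, for every x > 0 the Bochner integral R_x = ∫_x^∞ exp(−tA)·B·C·exp(−tA) dt converges; the map x ↦ R_x is differentiable with derivative dR_x/dx = −exp(−xA)·B·C·exp(−xA); and R_x satisfies the Lyapunov equation A·R_x + R_x·A = exp(−xA)·B·C·exp(−xA). -/

import Mathlib

open MeasureTheory

set_option maxHeartbeats 1000000
set_option synthInstance.maxHeartbeats 400000

/-- The semigroup `exp(-tA)` generated by a bounded operator `A`. -/
noncomputable def expA {H : Type*} [NormedAddCommGroup H] [InnerProductSpace ℂ H]
    [CompleteSpace H] (A : H →L[ℂ] H) (t : ℝ) : H →L[ℂ] H :=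
  NormedSpace.exp ((-(t : ℂ)) • A)

/-- `R_x = ∫_x^∞ exp(-tA)·B·C·exp(-tA) dt` as a Bochner integral, where `BC` stands for
the composite operator `B·C : H → H`. -/
noncomputable def Rop {H : Type*} [NormedAddCommGroup H] [InnerProductSpace ℂ H]
    [CompleteSpace H] (A : H →L[ℂ] H) (BC : H →L[ℂ] H) (x : ℝ) : H →L[ℂ] H :=
  ∫ t in Set.Ioi x, expA A t * BC * expA A t

section Aux

variable {H : Type*} [NormedAddCommGroup H] [InnerProductSpace ℂ H] [CompleteSpace H]

lemma expA_eq (A : H →L[ℂ] H) (t : ℝ) : expA A t = NormedSpace.exp (t • (-A)) := by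
  rw [expA]
  congr 1
  rw [smul_neg, ← neg_smul, ← Complex.coe_smul, Complex.ofReal_neg]

lemma expA_hasDerivAt (A : H →L[ℂ] H) (t : ℝ) :
    HasDerivAt (fun s : ℝ => expA A s) (-A * expA A t) t := by
  simp only [expA_eq]
  exact hasDerivAt_exp_smul_const' (-A) t

lemma expA_hasDerivAt' (A : H →L[ℂ] H) (t : ℝ) :
    HasDerivAt (fun s : ℝ => expA A s) (expA A t * -A) t := by
  simp only [expA_eq]
  exact hasDerivAt_exp_smul_const (-A) t

lemma expA_continuous (A : H →L[ℂ] H) : Continuous (fun s : ℝ => expA A s) :=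
  continuous_iff_continuousAt.2 fun t => (expA_hasDerivAt A t).continuousAt

/-- Integrability of continuous exponentially decaying operator-valued functions. -/
lemma integrableOn_of_expBound (g : ℝ → (H →L[ℂ] H)) (hg : Continuous g)
    (c b : ℝ) (hb : 0 < b) (hgb : ∀ t : ℝ, 0 ≤ t → ‖g t‖ ≤ c * Real.exp (-b * t))
    (x : ℝ) (hx : 0 < x) : IntegrableOn g (Set.Ioi x) := by
  refine Integrable.mono' ((exp_neg_integrableOn_Ioi x hb).const_mul c)
    (hg.aestronglyMeasurable.restrict) ?_
  filter_upwards [ae_restrict_mem measurableSet_Ioi] with t ht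
  exact hgb t (le_of_lt (lt_trans hx ht))

end Aux

/-- For bounded operators `A : H → H`, `B : H₀ → H`, `C : H → H₀` with
`‖exp(-tA)‖ ≤ M e^{-εt}` for `t ≥ 0`, the Bochner integral
`R_x = ∫_x^∞ exp(-tA)·B·C·exp(-tA) dt` converges for every `x > 0`, the map `x ↦ R_x` is
differentiable with derivative `-exp(-xA)·B·C·exp(-xA)`, and `R_x` satisfies the Lyapunov
equation `A·R_x + R_x·A = exp(-xA)·B·C·exp(-xA)`. -/
theorem Rop_integrable_hasDerivAt_lyapunov
    {H H₀ : Type*} [NormedAddCommGroup H] [InnerProductSpace ℂ H] [CompleteSpace H]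
    [NormedAddCommGroup H₀] [InnerProductSpace ℂ H₀] [CompleteSpace H₀]
    (A : H →L[ℂ] H) (B : H₀ →L[ℂ] H) (C : H →L[ℂ] H₀)
    (M ε : ℝ) (hM : 0 < M) (hε : 0 < ε)
    (hdecay : ∀ t : ℝ, 0 ≤ t → ‖expA A t‖ ≤ M * Real.exp (-ε * t)) :
    (∀ x : ℝ, 0 < x →
        IntegrableOn (fun t : ℝ => expA A t * (B ∘L C) * expA A t) (Set.Ioi x)) ∧
    (∀ x : ℝ, 0 < x →
        HasDerivAt (Rop A (B ∘L C)) (-(expA A x * (B ∘L C) * expA A x)) x) ∧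
    (∀ x : ℝ, 0 < x →
        A * Rop A (B ∘L C) x + Rop A (B ∘L C) x * A = expA A x * (B ∘L C) * expA A x) := by
  set BC := B ∘L C with hBC
  set f : ℝ → (H →L[ℂ] H) := fun t => expA A t * BC * expA A t with hf
  have hfc : Continuous f :=
    ((expA_continuous A).mul continuous_const).mul (expA_continuous A)
  -- decay bound for f
  have hbound : ∀ t : ℝ, 0 ≤ t → ‖f t‖ ≤ M * M * ‖BC‖ * Real.exp (-(2 * ε * t)) := by
    intro t ht
    have h1 := hdecay t ht
    have he : (0 : ℝ) ≤ Real.exp (-ε * t) := (Real.exp_pos _).le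
    calc ‖f t‖ ≤ ‖expA A t‖ * ‖BC‖ * ‖expA A t‖ :=
          (norm_mul_le _ _).trans
            (mul_le_mul_of_nonneg_right (norm_mul_le _ _) (norm_nonneg _))
      _ ≤ (M * Real.exp (-ε * t)) * ‖BC‖ * (M * Real.exp (-ε * t)) := by
          gcongr
      _ = M * M * ‖BC‖ * Real.exp (-(2 * ε * t)) := by
          rw [show -(2 * ε * t) = -ε * t + -ε * t by ring, Real.exp_add]; ring
  -- integrability of f
  have hfint : ∀ x : ℝ, 0 < x → IntegrableOn f (Set.Ioi x) := fun x hx =>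
    integrableOn_of_expBound f hfc (M * M * ‖BC‖) (2 * ε) (by linarith) (by
      intro t ht
      simpa [neg_mul, mul_assoc] using hbound t ht) x hx
  -- derivative of f
  have hd : ∀ t : ℝ, HasDerivAt f (-(A * f t + f t * A)) t := by
    intro t
    have h2 := ((expA_hasDerivAt A t).mul_const BC).mul (expA_hasDerivAt' A t)
    replace h2 : HasDerivAt f
        (-A * expA A t * BC * expA A t + expA A t * BC * (expA A t * -A)) t := h2
    convert h2 using 1
    show -(A * (expA A t * BC * expA A t) + (expA A t * BC * expA A t) * A) = _
    noncomm_ring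
  -- continuity of the derivative function
  have hF'c : Continuous (fun t => -(A * f t + f t * A)) :=
    ((continuous_const.mul hfc).add (hfc.mul continuous_const)).neg
  -- decay bound of the derivative
  have hF'int : ∀ x : ℝ, 0 < x →
      IntegrableOn (fun t => -(A * f t + f t * A)) (Set.Ioi x) := by
    intro x hx
    refine integrableOn_of_expBound _ hF'c (2 * ‖A‖ * (M * M * ‖BC‖)) (2 * ε)
      (by linarith) ?_ x hx
    intro t ht
    rw [neg_mul]
    have hb := hbound t ht
    have hA : (0 : ℝ) ≤ ‖A‖ := norm_nonneg _
    have h1 : ‖A * f t‖ ≤ ‖A‖ * ‖f t‖ := norm_mul_le _ _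
    have h2 : ‖f t * A‖ ≤ ‖f t‖ * ‖A‖ := norm_mul_le _ _
    have h3 : ‖-(A * f t + f t * A)‖ ≤ ‖A * f t‖ + ‖f t * A‖ := by
      rw [norm_neg]; exact norm_add_le _ _
    have hft : ‖f t‖ ≤ M * M * ‖BC‖ * Real.exp (-(2 * ε * t)) := hb
    nlinarith [norm_nonneg (f t), (Real.exp_pos (-(2 * ε * t))).le,
      mul_le_mul_of_nonneg_left hft hA]
  -- f tends to 0 at infinity
  have htend : Filter.Tendsto f Filter.atTop (nhds 0) := by
    apply squeeze_zero_norm' (a := fun t => M * M * ‖BC‖ * Real.exp (-(2 * ε * t)))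
    · filter_upwards [Filter.eventually_ge_atTop (0 : ℝ)] with t ht using hbound t ht
    · have h1 : Filter.Tendsto (fun t : ℝ => 2 * ε * t) Filter.atTop Filter.atTop :=
        Filter.Tendsto.const_mul_atTop (by linarith) Filter.tendsto_id
      have h2 : Filter.Tendsto (fun t : ℝ => Real.exp (-(2 * ε * t)))
          Filter.atTop (nhds 0) := Real.tendsto_exp_neg_atTop_nhds_zero.comp h1
      simpa [mul_zero] using h2.const_mul (M * M * ‖BC‖)
  refine ⟨hfint, ?_, ?_⟩
  · -- differentiability of Rop
    intro x hx
    set a : ℝ := x / 2 with ha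
    have hax : a < x := by simp [ha]; linarith
    have ha0 : 0 < a := by simp [ha]; linarith
    have hfinta : IntegrableOn f (Set.Ioi a) := hfint a ha0
    have hRopEq : ∀ y ∈ Set.Ioi a, Rop A BC y = Rop A BC a - ∫ t in a..y, f t := by
      intro y hy
      have hy' : a ≤ y := le_of_lt hy
      have hsplit : Rop A BC a = (∫ t in Set.Ioc a y, f t) + Rop A BC y := by
        simp only [Rop]
        rw [← setIntegral_union (Set.Ioc_disjoint_Ioi le_rfl) measurableSet_Ioi
          (hfinta.mono_set Set.Ioc_subset_Ioi_self) (hfinta.mono_set fun t ht =>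
            lt_of_le_of_lt hy' ht), Set.Ioc_union_Ioi_eq_Ioi hy']
      rw [intervalIntegral.integral_of_le hy', hsplit]
      abel
    have hG : HasDerivAt (fun y => Rop A BC a - ∫ t in a..y, f t) (-(f x)) x := by
      have hint : IntervalIntegrable f volume a x := hfc.intervalIntegrable a x
      have hder := intervalIntegral.integral_hasDerivAt_right hint
        (hfc.stronglyMeasurableAtFilter _ _) hfc.continuousAt
      have h := (hasDerivAt_const x (Rop A BC a)).sub hder
      rw [zero_sub] at h
      exact h
    refine hG.congr_of_eventuallyEq ?_
    filter_upwards [Ioi_mem_nhds hax] with y hy using hRopEq y hy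
  · -- Lyapunov equation
    intro x hx
    have key := integral_Ioi_of_hasDerivAt_of_tendsto
      (f := f) (f' := fun t => -(A * f t + f t * A)) (a := x)
      hfc.continuousWithinAt (fun t _ => hd t) (hF'int x hx) htend
    -- key : ∫ t in Ioi x, -(A * f t + f t * A) = 0 - f x
    have hAf : IntegrableOn (fun t => A * f t) (Set.Ioi x) := by
      have := (ContinuousLinearMap.mul ℂ (H →L[ℂ] H) A).integrable_comp (hfint x hx)
      simp at this
      exact this
    have hfA : IntegrableOn (fun t => f t * A) (Set.Ioi x) := by
      have := ((ContinuousLinearMap.mul ℂ (H →L[ℂ] H)).flip A).integrable_comp (hfint x hx)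
      simp at this
      exact this
    have e1 : ∫ t in Set.Ioi x, A * f t = A * Rop A BC x := by
      have := (ContinuousLinearMap.mul ℂ (H →L[ℂ] H) A).integral_comp_comm (hfint x hx)
      simpa [Rop] using this
    have e2 : ∫ t in Set.Ioi x, f t * A = Rop A BC x * A := by
      have := ((ContinuousLinearMap.mul ℂ (H →L[ℂ] H)).flip A).integral_comp_comm
        (hfint x hx)
      simpa [Rop] using this
    rw [integral_neg, integral_add hAf hfA, e1, e2, zero_sub, neg_inj] at key
    rw [key]
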